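/- The pair of quadratic polynomials (1 + e₁x + e₂x²/2, 1 + f₁x + f₂x²/2) lies in the image of the Wronski map W(b) = (b₁, Wr(b₁,b₂)) applied to triples (1+ax+bx²/2, x+cx²/2, x²/2) if and only if e₂ + f₂ = e₁f₁. -/
import Mathlib

open Polynomial

noncomputable def Wr (f g : Polynomial ℂ) : Polynomial ℂ :=
  f * derivative g - derivative f * g

lemma wr_comp (a b c : ℂ) :
    Wr (1 + C a * X + C (b / 2) * X ^ 2) (X + C (c / 2) * X ^ 2) =
      1 + C c * X + C ((a * c - b) / 2) * X ^ 2 := by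
  unfold Wr
  have hh : (2 : ℂ[X]) * C ((2:ℂ)⁻¹) = 1 := by
    rw [← map_ofNat (C : ℂ →+* ℂ[X]) 2, ← C_mul]
    norm_num
  simp only [derivative_add, derivative_one, derivative_mul, derivative_C, derivative_X,
    derivative_X_pow, div_eq_mul_inv, map_mul, map_sub, map_ofNat, Nat.cast_ofNat]
  push_cast
  linear_combination (C c * X) * hh

lemma coeffs_eq {p q r s : ℂ} (h : 1 + C p * X + C q * X ^ 2 = 1 + C r * X + C s * X ^ 2) :
    p = r ∧ q = s := by
  constructor
  · have := congrArg (fun f => coeff f 1) h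
    simpa using this
  · have := congrArg (fun f => coeff f 2) h
    simpa using this

theorem stmt12 (e₁ e₂ f₁ f₂ : ℂ) :
    (∃ a b c : ℂ,
        (1 + C a * X + C (b / 2) * X ^ 2 = 1 + C e₁ * X + C (e₂ / 2) * X ^ 2) ∧
        Wr (1 + C a * X + C (b / 2) * X ^ 2) (X + C (c / 2) * X ^ 2) =
          1 + C f₁ * X + C (f₂ / 2) * X ^ 2) ↔
      e₂ + f₂ = e₁ * f₁ := by
  constructor
  · rintro ⟨a, b, c, h1, h2⟩
    rw [wr_comp] at h2
    obtain ⟨ha, hb⟩ := coeffs_eq h1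
    obtain ⟨hc, hw⟩ := coeffs_eq h2
    field_simp at hb hw
    subst ha hb hc
    linear_combination -hw
  · intro h
    refine ⟨e₁, e₂, f₁, rfl, ?_⟩
    rw [wr_comp, show e₁ * f₁ - e₂ = f₂ by linear_combination -h]
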